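/- Let t > 0 and define ψ_t(ζ) = arctan(t - ζ) + arctan(ζ) for ζ ∈ ℝ. Then for all ζ ∈ ℝ, ψ_t''(ζ) · ψ_t(ζ) < 2 · (ψ_t'(ζ))², i.e. 1/ψ_t is strictly convex. -/

import Mathlib

set_option maxHeartbeats 1000000

open Real

lemma my_arctan_lt_self {x : ℝ} (hx : 0 < x) : Real.arctan x < x := by
  rcases lt_or_ge x (π/2) with h | h
  · have h2 := Real.lt_tan hx h
    have := Real.arctan_strictMono h2
    rwa [Real.arctan_tan (by linarith [Real.pi_pos]) h] at this
  · exact lt_of_lt_of_le (Real.arctan_lt_pi_div_two x) h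

lemma psi_deriv (t : ℝ) :
    deriv (fun ζ : ℝ => Real.arctan (t - ζ) + Real.arctan ζ)
      = fun ζ : ℝ => 1/(1+ζ^2) - 1/(1+(t-ζ)^2) := by
  funext z
  have h1 : HasDerivAt (fun ζ : ℝ => t - ζ) (-1) z := by
    simpa using (hasDerivAt_id z).const_sub t
  have h2 : HasDerivAt (fun ζ : ℝ => Real.arctan (t - ζ)) (1/(1+(t-z)^2) * (-1)) z :=
    (Real.hasDerivAt_arctan (t - z)).comp z h1
  have h3 : HasDerivAt (fun ζ : ℝ => Real.arctan (t - ζ) + Real.arctan ζ)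
      (1/(1+(t-z)^2) * (-1) + 1/(1+z^2)) z := h2.add (Real.hasDerivAt_arctan z)
  rw [h3.deriv]; ring

lemma psi_deriv2 (t z : ℝ) :
    deriv (fun ζ : ℝ => 1/(1+ζ^2) - 1/(1+(t-ζ)^2)) z
      = -(2*z)/(1+z^2)^2 - 2*(t-z)/(1+(t-z)^2)^2 := by
  have hA : (1+z^2) ≠ 0 := by positivity
  have hB : (1+(t-z)^2) ≠ 0 := by positivity
  have h1 : HasDerivAt (fun ζ : ℝ => 1+ζ^2) (2*z) z := by
    simpa using ((hasDerivAt_pow 2 z).const_add 1)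
  have h2 : HasDerivAt (fun ζ : ℝ => t - ζ) (-1) z := by
    simpa using (hasDerivAt_id z).const_sub t
  have h3 : HasDerivAt (fun ζ : ℝ => 1+(t-ζ)^2) (2*(t-z)*(-1)) z := by
    have := ((h2.pow 2).const_add 1)
    simpa using this
  have h4 := (h1.inv hA).sub (h3.inv hB)
  have h5 : HasDerivAt (fun ζ : ℝ => 1/(1+ζ^2) - 1/(1+(t-ζ)^2))
      (-(2*z)/(1+z^2)^2 - -(2*(t-z)*(-1))/(1+(t-z)^2)^2) z := by
    simpa [one_div, Pi.inv_def, Pi.sub_def] using h4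
  rw [h5.deriv]; ring

theorem reciprocal_psi_strictly_convex (t : ℝ) (ht : 0 < t) :
    ∀ ζ : ℝ,
      deriv (deriv (fun ζ : ℝ => Real.arctan (t - ζ) + Real.arctan ζ)) ζ *
        (Real.arctan (t - ζ) + Real.arctan ζ) <
      2 * (deriv (fun ζ : ℝ => Real.arctan (t - ζ) + Real.arctan ζ) ζ) ^ 2 := by
  intro ζ
  rw [psi_deriv t, psi_deriv2 t ζ]
  set P := Real.arctan (t - ζ) + Real.arctan ζ with hPdef
  have hA : (0:ℝ) < 1 + ζ^2 := by positivity
  have hB : (0:ℝ) < 1 + (t-ζ)^2 := by positivity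
  have hP : 0 < P := by
    have h := Real.arctan_strictMono (show ζ - t < ζ by linarith)
    rw [show ζ - t = -(t-ζ) by ring, Real.arctan_neg] at h
    simp only [hPdef]; linarith
  have key : (-(2*ζ)*(1+(t-ζ)^2)^2 - 2*(t-ζ)*(1+ζ^2)^2) * P < 2*t^2*(t-2*ζ)^2 := by
    rcases lt_or_ge ζ 0 with hz | hz
    · -- ζ < 0
      have hD : (0:ℝ) < 1 + ζ^2 - t*ζ := by nlinarith
      have hxy : (t - ζ) * ζ < 1 := by nlinarith
      have heq : P = Real.arctan (t / (1 + ζ^2 - t*ζ)) := by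
        rw [hPdef, Real.arctan_add hxy,
          show (t - ζ + ζ)/(1 - (t - ζ)*ζ) = t/(1 + ζ^2 - t*ζ) by
            rw [show 1 - (t - ζ)*ζ = 1 + ζ^2 - t*ζ from by ring,
              show t - ζ + ζ = t from by ring]]
      have hu : 0 < t / (1 + ζ^2 - t*ζ) := by positivity
      have hbound : P < t / (1 + ζ^2 - t*ζ) := heq ▸ my_arctan_lt_self hu
      have hPD : P * (1 + ζ^2 - t*ζ) < t := by
        rwa [lt_div_iff₀ hD] at hbound
      rcases le_or_gt 0 (ζ*(1+(t-ζ)^2)^2 + (t-ζ)*(1+ζ^2)^2) with hS | hS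
      · have hR : 0 < 2*t^2*(t-2*ζ)^2 := by
          have h7 : 0 < t - 2*ζ := by linarith
          positivity
        nlinarith [mul_nonneg hS hP.le]
      · have pc : -(ζ*(1+(t-ζ)^2)^2) - (t-ζ)*(1+ζ^2)^2
            ≤ t*(t-2*ζ)^2*(1 + ζ^2 - t*ζ) := by
          nlinarith [sq_nonneg ζ, sq_nonneg (t-ζ), sq_nonneg (t*ζ), mul_nonneg (neg_nonneg.mpr hz.le) (sq_nonneg (t-ζ)), sq_nonneg (ζ*(t-ζ)), mul_nonneg (mul_nonneg (neg_nonneg.mpr hz.le) ht.le) (sq_nonneg ζ), mul_nonneg (mul_nonneg (neg_nonneg.mpr hz.le) ht.le) (sq_nonneg (t-ζ))]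
        have h6 : 0 < t*(t-2*ζ)^2 := by nlinarith
        nlinarith [mul_le_mul_of_nonneg_right pc hP.le,
          mul_lt_mul_of_pos_left hPD h6]
    rcases le_or_gt ζ t with hzt | hzt
    · -- 0 ≤ ζ ≤ t
      have hpos : 0 < ζ*(1+(t-ζ)^2)^2 + (t-ζ)*(1+ζ^2)^2 := by
        rcases eq_or_lt_of_le hz with h0 | h0
        · rw [← h0]; simp; nlinarith
        · nlinarith [mul_pos h0 (pow_pos hB 2), mul_nonneg (by linarith : (0:ℝ) ≤ t - ζ) (pow_pos hA 2).le]
      nlinarith [mul_pos hpos hP, sq_nonneg (t-2*ζ), sq_nonneg t]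
    · -- ζ > t
      have hD : (0:ℝ) < 1 + ζ^2 - t*ζ := by nlinarith
      have hxy : (t - ζ) * ζ < 1 := by nlinarith
      have heq : P = Real.arctan (t / (1 + ζ^2 - t*ζ)) := by
        rw [hPdef, Real.arctan_add hxy,
          show (t - ζ + ζ)/(1 - (t - ζ)*ζ) = t/(1 + ζ^2 - t*ζ) by
            rw [show 1 - (t - ζ)*ζ = 1 + ζ^2 - t*ζ from by ring,
              show t - ζ + ζ = t from by ring]]
      have hu : 0 < t / (1 + ζ^2 - t*ζ) := by positivity
      have hbound : P < t / (1 + ζ^2 - t*ζ) := heq ▸ my_arctan_lt_self hu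
      have hPD : P * (1 + ζ^2 - t*ζ) < t := by
        rwa [lt_div_iff₀ hD] at hbound
      rcases le_or_gt 0 (ζ*(1+(t-ζ)^2)^2 + (t-ζ)*(1+ζ^2)^2) with hS | hS
      · have hR : 0 < 2*t^2*(t-2*ζ)^2 := by
          have h7 : t - 2*ζ < 0 := by linarith
          have h8 : 0 < (t-2*ζ)^2 := by
            have h9 : t - 2*ζ ≠ 0 := by linarith
            positivity
          nlinarith [mul_pos (mul_pos (by norm_num : (0:ℝ) < 2) (pow_pos ht 2)) h8]
        nlinarith [mul_nonneg hS hP.le]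
      · have pc : -(ζ*(1+(t-ζ)^2)^2) - (t-ζ)*(1+ζ^2)^2
            ≤ t*(t-2*ζ)^2*(1 + ζ^2 - t*ζ) := by
          nlinarith [sq_nonneg (t-ζ), sq_nonneg ζ, sq_nonneg (t*(t-ζ)), mul_nonneg (by linarith : (0:ℝ) ≤ ζ - t) (sq_nonneg ζ), sq_nonneg (ζ*(t-ζ)), mul_nonneg (mul_nonneg (by linarith : (0:ℝ) ≤ ζ - t) ht.le) (sq_nonneg (t-ζ)), mul_nonneg (mul_nonneg (by linarith : (0:ℝ) ≤ ζ - t) ht.le) (sq_nonneg ζ)]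
        have h6 : 0 < t*(t-2*ζ)^2 := by nlinarith
        nlinarith [mul_le_mul_of_nonneg_right pc hP.le,
          mul_lt_mul_of_pos_left hPD h6]
  have e0 : (-(2*ζ)/(1+ζ^2)^2 - 2*(t-ζ)/(1+(t-ζ)^2)^2)
      = (-(2*ζ)*(1+(t-ζ)^2)^2 - 2*(t-ζ)*(1+ζ^2)^2) / ((1+ζ^2)^2*(1+(t-ζ)^2)^2) := by
    rw [eq_div_iff (by positivity)]
    field_simp
  have e1 : (-(2*ζ)/(1+ζ^2)^2 - 2*(t-ζ)/(1+(t-ζ)^2)^2) * P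
      = ((-(2*ζ)*(1+(t-ζ)^2)^2 - 2*(t-ζ)*(1+ζ^2)^2) * P) / ((1+ζ^2)^2*(1+(t-ζ)^2)^2) := by
    rw [e0, div_mul_eq_mul_div]
  have e2 : 2*(1/(1+ζ^2) - 1/(1+(t-ζ)^2))^2
      = (2*t^2*(t-2*ζ)^2) / ((1+ζ^2)^2*(1+(t-ζ)^2)^2) := by
    rw [eq_div_iff (by positivity)]
    field_simp
    ring
  calc (-(2*ζ)/(1+ζ^2)^2 - 2*(t-ζ)/(1+(t-ζ)^2)^2) * P
      = ((-(2*ζ)*(1+(t-ζ)^2)^2 - 2*(t-ζ)*(1+ζ^2)^2) * P) / ((1+ζ^2)^2*(1+(t-ζ)^2)^2) := e1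
    _ < (2*t^2*(t-2*ζ)^2) / ((1+ζ^2)^2*(1+(t-ζ)^2)^2) := by
        exact div_lt_div_of_pos_right key (by positivity)
    _ = 2*(1/(1+ζ^2) - 1/(1+(t-ζ)^2))^2 := e2.symm
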